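/- For a Young tableau T with underlying group elements c_T = Σ_{g∈R(T)} g and d_T = Σ_{h∈C(T)} sgn(h)·h in Q[Σ_n], the Young symmetrizer e_T = c_T · d_T satisfies e_T² = n_T · e_T for some nonzero rational number n_T (namely n_T = n!/dim of the corresponding irreducible representation); in particular e_T is a quasi-idempotent. -/

import Mathlib

open Finset Equiv MonoidAlgebra

lemma cells_eq_of_marginals (μ : YoungDiagram) (S : Finset (ℕ × ℕ))
    (hr : ∀ k, (S.filter fun s => s.1 = k).card = μ.rowLen k)
    (hc : ∀ j, (S.filter fun s => s.2 = j).card = μ.colLen j) :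
    S = μ.cells := by
  suffices H : ∀ j, S.filter (fun s => s.2 = j) = μ.cells.filter (fun s => s.2 = j) by
    ext c
    have h2 := Finset.ext_iff.mp (H c.2) c
    simpa using h2
  intro j
  induction j using Nat.strong_induction_on with
  | _ j IH =>
  have hcard : (μ.cells.filter fun s => s.2 = j).card = μ.colLen j := by
    have hcol : μ.col j = μ.cells.filter fun s => s.2 = j := by
      ext c
      simp [YoungDiagram.mem_col_iff, YoungDiagram.mem_cells, and_comm]
    rw [μ.colLen_eq_card, hcol]
  apply Finset.eq_of_subset_of_card_le
  · intro c hcS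
    simp only [Finset.mem_filter] at hcS ⊢
    obtain ⟨hS, hj⟩ := hcS
    refine ⟨?_, hj⟩
    rw [YoungDiagram.mem_cells]
    by_contra hnot
    have hle : μ.rowLen c.1 ≤ j := by
      by_contra h
      apply hnot
      have hm : (c.1, c.2) ∈ μ := YoungDiagram.mem_iff_lt_rowLen.mpr (by omega)
      exact hm
    -- the row c.1 of S contains all (c.1, j') for j' < rowLen, plus c itself
    have hsub : insert c ((Finset.range (μ.rowLen c.1)).image (fun j' => (c.1, j')))
        ⊆ S.filter (fun s => s.1 = c.1) := by
      intro x hx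
      rcases Finset.mem_insert.mp hx with rfl | hx
      · simp [hS]
      · obtain ⟨j', hj', rfl⟩ := Finset.mem_image.mp hx
        rw [Finset.mem_range] at hj'
        have hj'lt : j' < j := lt_of_lt_of_le hj' hle
        have hmem : (c.1, j') ∈ μ.cells.filter (fun s => s.2 = j') := by
          simp [YoungDiagram.mem_cells, YoungDiagram.mem_iff_lt_rowLen, hj']
        rw [← IH j' hj'lt] at hmem
        exact Finset.mem_filter.mpr ⟨(Finset.mem_filter.mp hmem).1, rfl⟩
    have hcard2 : μ.rowLen c.1 + 1 ≤ (S.filter (fun s => s.1 = c.1)).card := by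
      calc μ.rowLen c.1 + 1
          = (insert c ((Finset.range (μ.rowLen c.1)).image (fun j' => (c.1, j')))).card := by
            rw [Finset.card_insert_of_notMem, Finset.card_image_of_injective,
              Finset.card_range]
            · intro a b hab; simpa using hab
            · intro hmem
              obtain ⟨j', hj', hx⟩ := Finset.mem_image.mp hmem
              rw [Finset.mem_range] at hj'
              have : c.2 = j' := by rw [← hx]
              omega
        _ ≤ _ := Finset.card_le_card hsub
    rw [hr] at hcard2
    omega
  · rw [hc j, hcard]

lemma exists_decomp {n : ℕ} {μ : YoungDiagram} (T : Fin n ≃ ↥μ.cells) (g : Equiv.Perm (Fin n))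
    (H : ∀ a b : Fin n, a ≠ b →
      ¬(((T a : ℕ × ℕ)).1 = ((T b : ℕ × ℕ)).1 ∧
        ((T (g⁻¹ a) : ℕ × ℕ)).2 = ((T (g⁻¹ b) : ℕ × ℕ)).2)) :
    ∃ p q : Equiv.Perm (Fin n),
      (∀ i, ((T (p i) : ℕ × ℕ)).1 = ((T i : ℕ × ℕ)).1) ∧
      (∀ i, ((T (q i) : ℕ × ℕ)).2 = ((T i : ℕ × ℕ)).2) ∧ g = p * q := by
  classical
  set φ : Fin n → ℕ × ℕ := fun i => (((T i : ℕ × ℕ)).1, ((T (g⁻¹ i) : ℕ × ℕ)).2) with hφ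
  have hinj : Function.Injective φ := by
    intro a b hab
    by_contra hne
    have h1 : (φ a).1 = (φ b).1 := congrArg Prod.fst hab
    have h2 : (φ a).2 = (φ b).2 := congrArg Prod.snd hab
    exact H a b hne ⟨h1, h2⟩
  set S : Finset (ℕ × ℕ) := Finset.univ.image φ with hSdef
  have himg : ∀ (P : ℕ × ℕ → Prop) [DecidablePred P],
      S.filter P = (Finset.univ.filter fun i => P (φ i)).image φ := by
    intro P _
    ext s
    simp only [hSdef, Finset.mem_filter, Finset.mem_image, Finset.mem_univ, true_and]
    constructor
    · rintro ⟨⟨i, rfl⟩, h⟩; exact ⟨i, h, rfl⟩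
    · rintro ⟨i, h, rfl⟩; exact ⟨⟨i, rfl⟩, h⟩
  have hr : ∀ k, (S.filter fun s => s.1 = k).card = μ.rowLen k := by
    intro k
    rw [himg, Finset.card_image_of_injective _ hinj, μ.rowLen_eq_card]
    apply Finset.card_bij (fun i _ => ((T i : ℕ × ℕ)))
    · intro i hi
      simp only [Finset.mem_filter, Finset.mem_univ, true_and] at hi
      rw [YoungDiagram.mem_row_iff]
      exact ⟨(YoungDiagram.mem_cells _).mp (T i).2, hi⟩
    · intro a _ b _ hab
      exact T.injective (Subtype.ext hab)
    · intro c hcmem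
      rw [YoungDiagram.mem_row_iff] at hcmem
      refine ⟨T.symm ⟨c, (YoungDiagram.mem_cells _).mpr hcmem.1⟩, ?_, ?_⟩
      · simp only [Finset.mem_filter, Finset.mem_univ, true_and, hφ, Equiv.apply_symm_apply]
        exact hcmem.2
      · simp
  have hc : ∀ j, (S.filter fun s => s.2 = j).card = μ.colLen j := by
    intro j
    rw [himg, Finset.card_image_of_injective _ hinj, μ.colLen_eq_card]
    apply Finset.card_bij (fun i _ => ((T (g⁻¹ i) : ℕ × ℕ)))
    · intro i hi
      simp only [Finset.mem_filter, Finset.mem_univ, true_and] at hi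
      rw [YoungDiagram.mem_col_iff]
      exact ⟨(YoungDiagram.mem_cells _).mp (T (g⁻¹ i)).2, hi⟩
    · intro a _ b _ hab
      exact (g⁻¹ : Equiv.Perm (Fin n)).injective (T.injective (Subtype.ext hab))
    · intro c hcmem
      rw [YoungDiagram.mem_col_iff] at hcmem
      refine ⟨g (T.symm ⟨c, (YoungDiagram.mem_cells _).mpr hcmem.1⟩), ?_, ?_⟩
      · simp only [Finset.mem_filter, Finset.mem_univ, true_and, hφ, Equiv.Perm.inv_def, Equiv.symm_apply_apply,
          Equiv.apply_symm_apply]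
        exact hcmem.2
      · simp
  have hS : S = μ.cells := cells_eq_of_marginals μ S hr hc
  have hmemφ : ∀ i, φ i ∈ μ.cells := by
    intro i
    rw [← hS, hSdef]
    exact Finset.mem_image_of_mem φ (Finset.mem_univ i)
  set ψ : Fin n → Fin n := fun i => T.symm ⟨φ i, hmemφ i⟩ with hψdef
  have hψinj : Function.Injective ψ := by
    intro a b hab
    apply hinj
    have := T.symm.injective hab
    exact congrArg Subtype.val this
  let p : Equiv.Perm (Fin n) := Equiv.ofBijective ψ (Finite.injective_iff_bijective.mp hψinj)
  have hTp : ∀ i, ((T (p i)) : ℕ × ℕ) = φ i := by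
    intro i
    show ((T (ψ i)) : ℕ × ℕ) = φ i
    rw [hψdef]
    simp
  refine ⟨p⁻¹, p * g, ?_, ?_, by group⟩
  · intro i
    have h1 := hTp (p⁻¹ i)
    have h2 : p (p⁻¹ i) = i := (Equiv.eq_symm_apply p).mp rfl
    rw [h2] at h1
    have := congrArg Prod.fst h1
    exact this.symm
  · intro i
    have h1 := hTp (g i)
    have h2 := congrArg Prod.snd h1
    simp only [hφ, Equiv.Perm.inv_def, Equiv.symm_apply_apply] at h2
    calc ((T ((p * g) i) : ℕ × ℕ)).2 = ((T (p (g i)) : ℕ × ℕ)).2 := rfl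
      _ = ((T i : ℕ × ℕ)).2 := h2

/-- For a Young tableau `T` (a bijective filling of the cells of a Young diagram
`μ` with `n = |μ|` boxes by `{0, …, n-1}`), with row group `R(T)` and column group `C(T)`,
the elements `c_T = Σ_{g ∈ R(T)} g` and `d_T = Σ_{h ∈ C(T)} sgn(h)·h` of `ℚ[Σ_n]` give a
Young symmetrizer `e_T = c_T · d_T` satisfying `e_T² = n_T • e_T` for some nonzero rational
number `n_T`; in particular `e_T` is a quasi-idempotent. -/
theorem young_symmetrizer_quasi_idempotent
    (n : ℕ) (μ : YoungDiagram) (hμ : μ.cells.card = n) (T : Fin n ≃ ↥μ.cells) :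
    letI R : Finset (Equiv.Perm (Fin n)) :=
      Finset.univ.filter fun g => ∀ i : Fin n, ((T (g i) : ℕ × ℕ)).1 = ((T i : ℕ × ℕ)).1
    letI C : Finset (Equiv.Perm (Fin n)) :=
      Finset.univ.filter fun g => ∀ i : Fin n, ((T (g i) : ℕ × ℕ)).2 = ((T i : ℕ × ℕ)).2
    letI cT : MonoidAlgebra ℚ (Equiv.Perm (Fin n)) :=
      ∑ g ∈ R, MonoidAlgebra.single g (1 : ℚ)
    letI dT : MonoidAlgebra ℚ (Equiv.Perm (Fin n)) :=
      ∑ h ∈ C, MonoidAlgebra.single h (((Equiv.Perm.sign h : ℤ) : ℚ))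
    ∃ nT : ℚ, nT ≠ 0 ∧ (cT * dT) * (cT * dT) = nT • (cT * dT) := by
  set Rs : Finset (Equiv.Perm (Fin n)) :=
    Finset.univ.filter fun g => ∀ i : Fin n, ((T (g i) : ℕ × ℕ)).1 = ((T i : ℕ × ℕ)).1 with hRs
  set Cs : Finset (Equiv.Perm (Fin n)) :=
    Finset.univ.filter fun g => ∀ i : Fin n, ((T (g i) : ℕ × ℕ)).2 = ((T i : ℕ × ℕ)).2 with hCs
  set cT : MonoidAlgebra ℚ (Equiv.Perm (Fin n)) :=
    ∑ g ∈ Rs, MonoidAlgebra.single g (1 : ℚ) with hcT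
  set dT : MonoidAlgebra ℚ (Equiv.Perm (Fin n)) :=
    ∑ h ∈ Cs, MonoidAlgebra.single h (((Equiv.Perm.sign h : ℤ) : ℚ)) with hdT
  -- membership lemmas
  have hmemR : ∀ g : Equiv.Perm (Fin n), g ∈ Rs ↔
      (∀ i, ((T (g i) : ℕ × ℕ)).1 = ((T i : ℕ × ℕ)).1) := by
    intro g; rw [hRs]; simp
  have hmemC : ∀ g : Equiv.Perm (Fin n), g ∈ Cs ↔
      (∀ i, ((T (g i) : ℕ × ℕ)).2 = ((T i : ℕ × ℕ)).2) := by
    intro g; rw [hCs]; simp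
  have h1R : (1 : Equiv.Perm (Fin n)) ∈ Rs := (hmemR 1).mpr fun i => rfl
  have h1C : (1 : Equiv.Perm (Fin n)) ∈ Cs := (hmemC 1).mpr fun i => rfl
  have hRmul : ∀ a b : Equiv.Perm (Fin n), a ∈ Rs → b ∈ Rs → a * b ∈ Rs := by
    intro a b ha hb
    rw [hmemR] at ha hb ⊢
    intro i
    exact (ha (b i)).trans (hb i)
  have hRinv : ∀ a : Equiv.Perm (Fin n), a ∈ Rs → a⁻¹ ∈ Rs := by
    intro a ha
    rw [hmemR] at ha ⊢
    intro i
    have h2 := ha (a⁻¹ i)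
    rw [show a (a⁻¹ i) = i from (Equiv.eq_symm_apply a).mp rfl] at h2
    exact h2.symm
  have hCmul : ∀ a b : Equiv.Perm (Fin n), a ∈ Cs → b ∈ Cs → a * b ∈ Cs := by
    intro a b ha hb
    rw [hmemC] at ha hb ⊢
    intro i
    exact (ha (b i)).trans (hb i)
  have hCinv : ∀ a : Equiv.Perm (Fin n), a ∈ Cs → a⁻¹ ∈ Cs := by
    intro a ha
    rw [hmemC] at ha ⊢
    intro i
    have h2 := ha (a⁻¹ i)
    rw [show a (a⁻¹ i) = i from (Equiv.eq_symm_apply a).mp rfl] at h2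
    exact h2.symm
  have htriv : ∀ g : Equiv.Perm (Fin n), g ∈ Rs → g ∈ Cs → g = 1 := by
    intro g hgR hgC
    rw [hmemR] at hgR
    rw [hmemC] at hgC
    apply Equiv.ext
    intro i
    exact T.injective (Subtype.ext (Prod.ext (hgR i) (hgC i)))
  -- coefficient formula for dT
  have hdapp : ∀ y : Equiv.Perm (Fin n),
      dT.coeff y = if y ∈ Cs then ((Equiv.Perm.sign y : ℤ) : ℚ) else 0 := by
    intro y
    rw [hdT, MonoidAlgebra.coeff_sum, Finset.sum_apply']
    simp [MonoidAlgebra.coeff_single, Finsupp.single_apply]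
  -- left invariance of cT
  have hcmul : ∀ p : Equiv.Perm (Fin n), p ∈ Rs →
      MonoidAlgebra.single p (1 : ℚ) * cT = cT := by
    intro p hp
    rw [hcT, Finset.mul_sum]
    refine Finset.sum_nbij' (fun g => p * g) (fun g => p⁻¹ * g) ?_ ?_ ?_ ?_ ?_
    · intro g hg; exact hRmul p g hp hg
    · intro g hg; exact hRmul p⁻¹ g (hRinv p hp) hg
    · intro g _; group
    · intro g _; group
    · intro g _
      rw [MonoidAlgebra.single_mul_single, one_mul]
  -- right invariance of dT
  have hdmulr : ∀ q : Equiv.Perm (Fin n), q ∈ Cs →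
      dT * MonoidAlgebra.single q (1 : ℚ) = ((Equiv.Perm.sign q : ℤ) : ℚ) • dT := by
    intro q hq
    rw [hdT, Finset.sum_mul, Finset.smul_sum]
    refine Finset.sum_nbij' (fun h => h * q) (fun h => h * q⁻¹) ?_ ?_ ?_ ?_ ?_
    · intro h hh; exact hCmul h q hh hq
    · intro h hh; exact hCmul h q⁻¹ hh (hCinv q hq)
    · intro h _; group
    · intro h _; group
    · intro h _
      rw [MonoidAlgebra.single_mul_single, MonoidAlgebra.smul_single']
      have hsq : ((Equiv.Perm.sign q : ℤ) : ℚ) * ((Equiv.Perm.sign q : ℤ) : ℚ) = 1 := by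
        rcases Int.units_eq_one_or (Equiv.Perm.sign q) with h | h <;> rw [h] <;> norm_num
      congr 1
      rw [Equiv.Perm.sign_mul, Units.val_mul, Int.cast_mul]
      linear_combination (-((Equiv.Perm.sign h : ℤ) : ℚ)) * hsq
  set eT : MonoidAlgebra ℚ (Equiv.Perm (Fin n)) := cT * dT with heT
  have hle : ∀ p ∈ Rs, MonoidAlgebra.single p (1:ℚ) * eT = eT := by
    intro p hp; rw [heT, ← mul_assoc, hcmul p hp]
  have hre : ∀ q ∈ Cs, eT * MonoidAlgebra.single q (1:ℚ) =
      ((Equiv.Perm.sign q : ℤ):ℚ) • eT := by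
    intro q hq; rw [heT, mul_assoc, hdmulr q hq, mul_smul_comm]
  -- an invariant element vanishing at 1 is zero
  have hzero : ∀ f : MonoidAlgebra ℚ (Equiv.Perm (Fin n)),
      (∀ p ∈ Rs, ∀ q ∈ Cs, MonoidAlgebra.single p (1:ℚ) * f * MonoidAlgebra.single q (1:ℚ) =
        ((Equiv.Perm.sign q : ℤ):ℚ) • f) →
      f.coeff 1 = 0 → f = 0 := by
    intro f hf hf1
    refine MonoidAlgebra.ext (Finsupp.ext fun g => ?_)
    show f.coeff g = 0
    by_cases hex : ∃ a b : Fin n, a ≠ b ∧ ((T a : ℕ×ℕ)).1 = ((T b : ℕ×ℕ)).1 ∧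
        ((T (g⁻¹ a) : ℕ×ℕ)).2 = ((T (g⁻¹ b) : ℕ×ℕ)).2
    · obtain ⟨a, b, hne, hrow, hcol⟩ := hex
      set τ : Equiv.Perm (Fin n) := Equiv.swap a b with hτdef
      have hτ : τ ∈ Rs := by
        rw [hmemR]; intro i
        rcases eq_or_ne i a with rfl | hia
        · rw [hτdef, Equiv.swap_apply_left]; exact hrow.symm
        · rcases eq_or_ne i b with rfl | hib
          · rw [hτdef, Equiv.swap_apply_right]; exact hrow
          · rw [hτdef, Equiv.swap_apply_of_ne_of_ne hia hib]
      set q : Equiv.Perm (Fin n) := g⁻¹ * τ * g with hqdef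
      have hq : q ∈ Cs := by
        rw [hmemC]; intro i
        have happ : q i = g⁻¹ (τ (g i)) := rfl
        rcases eq_or_ne (g i) a with hga | hga
        · have hi : i = g⁻¹ a := by rw [← hga, Equiv.Perm.inv_def, Equiv.symm_apply_apply]
          rw [happ, hga, hτdef, Equiv.swap_apply_left, hi]
          exact hcol.symm
        · rcases eq_or_ne (g i) b with hgb | hgb
          · have hi : i = g⁻¹ b := by rw [← hgb, Equiv.Perm.inv_def, Equiv.symm_apply_apply]
            rw [happ, hgb, hτdef, Equiv.swap_apply_right, hi]
            exact hcol
          · rw [happ, hτdef, Equiv.swap_apply_of_ne_of_ne hga hgb, Equiv.Perm.inv_def, Equiv.symm_apply_apply]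
      have hsgn : ((Equiv.Perm.sign q : ℤ) : ℚ) = -1 := by
        have hs : Equiv.Perm.sign q = -1 := by
          rw [hqdef, Equiv.Perm.sign_mul, Equiv.Perm.sign_mul, Equiv.Perm.sign_inv,
            hτdef, Equiv.Perm.sign_swap hne,
            mul_comm (Equiv.Perm.sign g) (-1 : ℤˣ), mul_assoc, Int.units_mul_self, mul_one]
        rw [hs]; norm_num
      have harg : τ⁻¹ * (g * q⁻¹) = g := by
        rw [hqdef, hτdef]
        simp [mul_inv_rev, ← mul_assoc]
      have hI := hf τ hτ q hq
      have hIg := congrArg (fun x : MonoidAlgebra ℚ (Equiv.Perm (Fin n)) => x.coeff g) hI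
      simp only [MonoidAlgebra.coeff_mul_single_apply, MonoidAlgebra.coeff_single_mul_apply, one_mul, mul_one,
        MonoidAlgebra.coeff_smul_apply, smul_eq_mul] at hIg
      rw [harg] at hIg
      rw [hsgn] at hIg
      linarith
    · have H : ∀ a b : Fin n, a ≠ b → ¬(((T a : ℕ×ℕ)).1 = ((T b : ℕ×ℕ)).1 ∧
          ((T (g⁻¹ a) : ℕ×ℕ)).2 = ((T (g⁻¹ b) : ℕ×ℕ)).2) := by
        intro a b hne hab
        exact hex ⟨a, b, hne, hab.1, hab.2⟩
      obtain ⟨p, q, hp, hq, hgpq⟩ := exists_decomp T g H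
      have hpR : p ∈ Rs := (hmemR p).mpr hp
      have hqC : q ∈ Cs := (hmemC q).mpr hq
      have hI := hf p hpR q hqC
      have hIg := congrArg (fun x : MonoidAlgebra ℚ (Equiv.Perm (Fin n)) => x.coeff g) hI
      simp only [MonoidAlgebra.coeff_mul_single_apply, MonoidAlgebra.coeff_single_mul_apply, one_mul, mul_one,
        MonoidAlgebra.coeff_smul_apply, smul_eq_mul] at hIg
      have harg : p⁻¹ * (g * q⁻¹) = 1 := by rw [hgpq]; group
      rw [harg, hf1] at hIg
      rcases Int.units_eq_one_or (Equiv.Perm.sign q) with h | h <;> rw [h] at hIg <;>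
        · simpa using hIg.symm
  -- coefficient of eT at 1
  have he1 : eT.coeff 1 = 1 := by
    rw [heT, hcT, Finset.sum_mul, MonoidAlgebra.coeff_sum, Finset.sum_apply']
    rw [Finset.sum_eq_single_of_mem 1 h1R]
    · simp [MonoidAlgebra.coeff_single_mul_apply, hdapp, h1C]
    · intro p hpR hpne
      rw [MonoidAlgebra.coeff_single_mul_apply, one_mul, hdapp, if_neg]
      intro hpC
      have h2 := htriv p⁻¹ (hRinv p hpR) hpC
      exact hpne (by rw [← inv_inv p, h2, inv_one])
  -- invariance properties
  have hinv_e : ∀ p ∈ Rs, ∀ q ∈ Cs, MonoidAlgebra.single p (1:ℚ) * eT *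
      MonoidAlgebra.single q (1:ℚ) = ((Equiv.Perm.sign q : ℤ):ℚ) • eT := by
    intro p hp q hq; rw [hle p hp, hre q hq]
  have hinv_ee : ∀ p ∈ Rs, ∀ q ∈ Cs, MonoidAlgebra.single p (1:ℚ) * (eT * eT) *
      MonoidAlgebra.single q (1:ℚ) = ((Equiv.Perm.sign q : ℤ):ℚ) • (eT * eT) := by
    intro p hp q hq
    rw [← mul_assoc, hle p hp, mul_assoc, hre q hq, mul_smul_comm]
  have hdiffinv : ∀ p ∈ Rs, ∀ q ∈ Cs,
      MonoidAlgebra.single p (1:ℚ) * (eT * eT - ((eT * eT).coeff 1) • eT) *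
        MonoidAlgebra.single q (1:ℚ) =
      ((Equiv.Perm.sign q : ℤ):ℚ) • (eT * eT - ((eT * eT).coeff 1) • eT) := by
    intro p hp q hq
    rw [mul_sub, sub_mul, hinv_ee p hp q hq, smul_sub]
    congr 1
    rw [mul_smul_comm, smul_mul_assoc, hinv_e p hp q hq, smul_comm]
  have hdiff := hzero _ hdiffinv (by
    rw [MonoidAlgebra.coeff_sub, Finsupp.sub_apply, MonoidAlgebra.coeff_smul_apply, he1, smul_eq_mul, mul_one, sub_self])
  have heq : eT * eT = ((eT * eT).coeff 1) • eT := by rwa [sub_eq_zero] at hdiff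
  refine ⟨(eT * eT).coeff 1, ?_, heq⟩
  -- nonvanishing via the trace of left multiplication
  intro h0
  rw [h0, zero_smul] at heq
  let b : Module.Basis (Equiv.Perm (Fin n)) ℚ (MonoidAlgebra ℚ (Equiv.Perm (Fin n))) :=
    MonoidAlgebra.basis (Equiv.Perm (Fin n)) ℚ
  haveI : Module.Free ℚ (MonoidAlgebra ℚ (Equiv.Perm (Fin n))) := Module.Free.of_basis b
  haveI : Module.Finite ℚ (MonoidAlgebra ℚ (Equiv.Perm (Fin n))) := Module.Finite.of_basis b
  set L := LinearMap.mulLeft ℚ eT with hL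
  have hnil : IsNilpotent L := by
    refine ⟨2, ?_⟩
    rw [pow_two]
    apply LinearMap.ext
    intro x
    rw [Module.End.mul_apply, LinearMap.zero_apply, hL, LinearMap.mulLeft_apply,
      LinearMap.mulLeft_apply, ← mul_assoc, heq, zero_mul]
  have htr0 : LinearMap.trace ℚ _ L = 0 :=
    (LinearMap.isNilpotent_trace_of_isNilpotent hnil).eq_zero
  have htr : LinearMap.trace ℚ _ L = (Fintype.card (Equiv.Perm (Fin n)) : ℚ) := by
    rw [LinearMap.trace_eq_matrix_trace ℚ b L, Matrix.trace]
    have hdiag : ∀ g : Equiv.Perm (Fin n), (LinearMap.toMatrix b b L).diag g = 1 := by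
      intro g
      rw [Matrix.diag_apply, LinearMap.toMatrix_apply]
      simp only [b, hL, LinearMap.mulLeft_apply, MonoidAlgebra.basis_apply,
        LinearEquiv.refl_apply]
      show (eT * MonoidAlgebra.single g (1:ℚ)).coeff g = 1
      rw [MonoidAlgebra.coeff_mul_single_apply, mul_inv_cancel, he1, mul_one]
    rw [Finset.sum_congr rfl (fun g _ => hdiag g)]
    simp
  rw [htr0] at htr
  have hpos : (0:ℚ) < (Fintype.card (Equiv.Perm (Fin n)) : ℚ) := by
    exact_mod_cast Fintype.card_pos
  linarith
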